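/- Let (S_n)_{n≥1} be a strictly increasing sequence of positive reals with ∑ S_n^{-1/α} < ∞ for all α ∈ (0,1), and let γ : (0,1) → (0,1] satisfy γ(α)/α → c ∈ [0,∞) as α → 0⁺. Then for each n ≥ 2, P_n(α)^{γ(α)} → (S_1/S_n)^c as α → 0⁺, where P_n(α) = S_n^{-1/α} / ∑_{i=1}^∞ S_i^{-1/α}. -/

import Mathlib

open Filter Topology

/-- `S` (indexed from 0, representing `S_1 < S_2 < ⋯`) strictly increasing positive with
`∑ S_i^(-1/α) < ∞` for all `α ∈ (0,1)`, and `γ : (0,1) → (0,1]` with `γ(α)/α → c ∈ [0,∞)`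
as `α → 0⁺`.  Then for each `n ≥ 2` (here index `n ≥ 1`),
`P_n(α)^{γ(α)} → (S_1/S_n)^c` as `α → 0⁺`. -/
theorem stmt_2
    (S : ℕ → ℝ) (hpos : 0 < S 0) (hmono : StrictMono S)
    (hsum : ∀ α ∈ Set.Ioo (0 : ℝ) 1, Summable (fun i : ℕ => S i ^ (-(1 / α))))
    (γ : ℝ → ℝ) (hγ : ∀ α ∈ Set.Ioo (0 : ℝ) 1, γ α ∈ Set.Ioc (0 : ℝ) 1)
    (c : ℝ) (hc : 0 ≤ c)
    (hlim : Tendsto (fun α => γ α / α) (𝓝[>] 0) (𝓝 c))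
    (P : ℕ → ℝ → ℝ)
    (hP : ∀ n α, P n α = S n ^ (-(1 / α)) / ∑' i : ℕ, S i ^ (-(1 / α)))
    (n : ℕ) (hn : 1 ≤ n) :
    Tendsto (fun α : ℝ => P n α ^ γ α) (𝓝[>] 0) (𝓝 ((S 0 / S n) ^ c)) := by
  have hposS : ∀ i, 0 < S i := fun i => lt_of_lt_of_le hpos (hmono.monotone (Nat.zero_le i))
  set b : ℝ := S 0 / S n with hb
  have hb0 : 0 < b := div_pos hpos (hposS n)
  set r : ℝ := S 0 / S 1 with hr
  have hr0 : 0 < r := div_pos hpos (hposS 1)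
  have hr1 : r < 1 := (div_lt_one (hposS 1)).2 (hmono Nat.zero_lt_one)
  -- Q α = ∑ (S 0 / S i)^(1/α)
  set Q : ℝ → ℝ := fun α => ∑' i : ℕ, (S 0 / S i) ^ (1 / α) with hQ
  -- basic rewriting of terms
  have hterm : ∀ (i : ℕ) (α : ℝ), (S 0 / S i) ^ (1 / α)
      = S 0 ^ (1 / α) * S i ^ (-(1 / α)) := by
    intro i α
    rw [Real.div_rpow hpos.le (hposS i).le, Real.rpow_neg (hposS i).le, div_eq_mul_inv]
  -- summability of Q terms for α ∈ Ioo 0 1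
  have hQsum : ∀ α ∈ Set.Ioo (0 : ℝ) 1, Summable (fun i : ℕ => (S 0 / S i) ^ (1 / α)) := by
    intro α hα
    have := (hsum α hα).mul_left (S 0 ^ (1 / α))
    exact this.congr fun i => (hterm i α).symm
  -- Q ≥ 1 for α ∈ Ioo 0 1
  have hQ1 : ∀ α ∈ Set.Ioo (0 : ℝ) 1, 1 ≤ Q α := by
    intro α hα
    have h0 : (S 0 / S 0 : ℝ) ^ (1 / α) = 1 := by
      rw [div_self hpos.ne', Real.one_rpow]
    calc (1 : ℝ) = (S 0 / S 0) ^ (1 / α) := h0.symm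
      _ ≤ Q α := Summable.le_tsum (hQsum α hα) 0 fun i _ =>
          Real.rpow_nonneg (div_pos hpos (hposS i)).le _
  -- P n α in terms of Q
  have hPQ : ∀ α ∈ Set.Ioo (0 : ℝ) 1, P n α = b ^ (1 / α) / Q α := by
    intro α hα
    have hT : (∑' i : ℕ, S i ^ (-(1 / α))) = S 0 ^ (-(1 / α)) * Q α := by
      rw [hQ, ← tsum_mul_left]
      refine tsum_congr fun i => ?_
      rw [hterm, ← mul_assoc, ← Real.rpow_add hpos, neg_add_cancel, Real.rpow_zero, one_mul]
    have hSn : S 0 ^ (-(1 / α)) * b ^ (1 / α) = S n ^ (-(1 / α)) := by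
      rw [hb, hterm n α, ← mul_assoc, ← Real.rpow_add hpos, neg_add_cancel,
        Real.rpow_zero, one_mul]
    rw [hP, hT, ← hSn]
    have h0 : S 0 ^ (-(1 / α)) ≠ 0 := (Real.rpow_pos_of_pos hpos _).ne'
    exact mul_div_mul_left _ _ h0
  -- the constant C
  set C : ℝ := ∑' i : ℕ, (S 0 / S (i + 1)) ^ (2 : ℝ) with hC
  have hCsum : Summable (fun i : ℕ => (S 0 / S (i + 1)) ^ (2 : ℝ)) := by
    have h12 : (1 / 2 : ℝ) ∈ Set.Ioo (0 : ℝ) 1 := by norm_num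
    have h2 : Summable (fun i : ℕ => (S 0 / S i) ^ (2 : ℝ)) := by
      have := hQsum (1 / 2) h12
      rwa [show (1 : ℝ) / (1 / 2) = 2 by norm_num] at this
    have := h2.comp_injective (i := fun k : ℕ => k + 1) (fun a b h => by simpa using h)
    simpa [Function.comp_def] using this
  -- tail bound for α ∈ Ioo 0 (1/2)
  have htail : ∀ α ∈ Set.Ioo (0 : ℝ) (1 / 2),
      (∑' i : ℕ, (S 0 / S (i + 1)) ^ (1 / α)) ≤ C * r ^ (1 / α - 2) := by
    intro α hα
    have hα1 : α ∈ Set.Ioo (0 : ℝ) 1 := ⟨hα.1, lt_trans hα.2 (by norm_num)⟩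
    have hexp : (0 : ℝ) ≤ 1 / α - 2 := by
      have : (2 : ℝ) < 1 / α := by
        rw [lt_div_iff₀ hα.1]
        linarith [hα.2]
      linarith
    have hpt : ∀ i : ℕ, (S 0 / S (i + 1)) ^ (1 / α)
        ≤ (S 0 / S (i + 1)) ^ (2 : ℝ) * r ^ (1 / α - 2) := by
      intro i
      have hposi : (0 : ℝ) < S 0 / S (i + 1) := div_pos hpos (hposS (i + 1))
      have hle : S 0 / S (i + 1) ≤ r :=
        div_le_div_of_nonneg_left hpos.le (hposS 1) (hmono.monotone (Nat.succ_le_succ (Nat.zero_le i)))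
      calc (S 0 / S (i + 1)) ^ (1 / α)
          = (S 0 / S (i + 1)) ^ (2 : ℝ) * (S 0 / S (i + 1)) ^ (1 / α - 2) := by
            rw [← Real.rpow_add hposi]; norm_num
        _ ≤ (S 0 / S (i + 1)) ^ (2 : ℝ) * r ^ (1 / α - 2) :=
            mul_le_mul_of_nonneg_left (Real.rpow_le_rpow hposi.le hle hexp)
              (Real.rpow_nonneg hposi.le _)
    have hsumL : Summable (fun i : ℕ => (S 0 / S (i + 1)) ^ (1 / α)) :=
      ((hQsum α hα1).comp_injective (i := fun k : ℕ => k + 1) (fun a b h => by simpa using h)).congr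
        fun i => rfl
    have hsumR : Summable (fun i : ℕ => (S 0 / S (i + 1)) ^ (2 : ℝ) * r ^ (1 / α - 2)) :=
      hCsum.mul_right _
    calc (∑' i : ℕ, (S 0 / S (i + 1)) ^ (1 / α))
        ≤ ∑' i : ℕ, (S 0 / S (i + 1)) ^ (2 : ℝ) * r ^ (1 / α - 2) :=
          Summable.tsum_le_tsum hpt hsumL hsumR
      _ = C * r ^ (1 / α - 2) := by rw [tsum_mul_right]
  -- Q α ≤ 1 + C * r^(1/α - 2) for α ∈ Ioo 0 (1/2)
  have hQub : ∀ α ∈ Set.Ioo (0 : ℝ) (1 / 2), Q α ≤ 1 + C * r ^ (1 / α - 2) := by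
    intro α hα
    have hα1 : α ∈ Set.Ioo (0 : ℝ) 1 := ⟨hα.1, lt_trans hα.2 (by norm_num)⟩
    have hsplit : Q α = (S 0 / S 0) ^ (1 / α) + ∑' i : ℕ, (S 0 / S (i + 1)) ^ (1 / α) :=
      Summable.tsum_eq_zero_add (hQsum α hα1)
    rw [hsplit, div_self hpos.ne', Real.one_rpow]
    linarith [htail α hα]
  -- r^(1/α - 2) → 0
  have hrlim : Tendsto (fun α : ℝ => r ^ (1 / α - 2)) (𝓝[>] 0) (𝓝 0) := by
    have h1 : Tendsto (fun α : ℝ => 1 / α - 2) (𝓝[>] 0) atTop := by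
      have := tendsto_inv_nhdsGT_zero (𝕜 := ℝ)
      simpa [one_div, sub_eq_add_neg] using this.atTop_add (tendsto_const_nhds (x := (-2 : ℝ)))
    exact (tendsto_rpow_atTop_of_base_lt_one r (by linarith) hr1).comp h1
  -- Q → 1
  have hQlim : Tendsto Q (𝓝[>] 0) (𝓝 1) := by
    have hupper : Tendsto (fun α : ℝ => 1 + C * r ^ (1 / α - 2)) (𝓝[>] 0) (𝓝 1) := by
      have := (hrlim.const_mul C).const_add 1
      simpa using this
    have hev : ∀ᶠ α in 𝓝[>] (0 : ℝ), α ∈ Set.Ioo (0 : ℝ) (1 / 2) := by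
      filter_upwards [Ioo_mem_nhdsGT_of_mem (by norm_num : (0 : ℝ) ∈ Set.Ico (0:ℝ) (1/2))]
        with α hα using hα
    refine tendsto_of_tendsto_of_tendsto_of_le_of_le' tendsto_const_nhds hupper ?_ ?_
    · filter_upwards [hev] with α hα
      exact hQ1 α ⟨hα.1, lt_trans hα.2 (by norm_num)⟩
    · filter_upwards [hev] with α hα using hQub α hα
  -- Q^γ → 1 by squeeze
  have hev1 : ∀ᶠ α in 𝓝[>] (0 : ℝ), α ∈ Set.Ioo (0 : ℝ) 1 := by
    filter_upwards [Ioo_mem_nhdsGT_of_mem (by norm_num : (0 : ℝ) ∈ Set.Ico (0:ℝ) 1)]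
      with α hα using hα
  have hQγ : Tendsto (fun α => Q α ^ γ α) (𝓝[>] 0) (𝓝 1) := by
    refine tendsto_of_tendsto_of_tendsto_of_le_of_le' tendsto_const_nhds hQlim ?_ ?_
    · filter_upwards [hev1] with α hα
      exact Real.one_le_rpow (hQ1 α hα) (hγ α hα).1.le
    · filter_upwards [hev1] with α hα
      calc Q α ^ γ α ≤ Q α ^ (1 : ℝ) :=
            Real.rpow_le_rpow_of_exponent_le (hQ1 α hα) (hγ α hα).2
        _ = Q α := Real.rpow_one _
  -- b^(γ/α) → b^c
  have hbγ : Tendsto (fun α => b ^ (γ α / α)) (𝓝[>] 0) (𝓝 (b ^ c)) :=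
    (Real.continuousAt_const_rpow hb0.ne').tendsto.comp hlim
  -- combine
  have hfinal := hbγ.div hQγ one_ne_zero
  rw [div_one] at hfinal
  refine hfinal.congr' ?_
  filter_upwards [hev1] with α hα
  simp only [Pi.div_apply]
  rw [hPQ α hα, Real.div_rpow (Real.rpow_nonneg hb0.le _)
    (le_trans zero_le_one (hQ1 α hα)), ← Real.rpow_mul hb0.le,
    one_div, inv_mul_eq_div]
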